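/- Every epimorphism of R-modules M → F with F flat is a pure epimorphism; that is, for every finitely presented R-module A, the induced map Hom(A, M) → Hom(A, F) is surjective. -/

import Mathlib

universe u

/-- Every epimorphism of `R`-modules `M → F` with `F` flat is a pure
epimorphism: for every finitely presented `R`-module `A`, the induced map
`Hom(A, M) → Hom(A, F)` is surjective. -/
theorem epi_onto_flat_is_pure (R : Type u) [CommRing R]
    (M F : Type u) [AddCommGroup M] [Module R M] [AddCommGroup F] [Module R F]
    [Module.Flat R F] (g : M →ₗ[R] F) (hg : Function.Surjective g)
    (A : Type u) [AddCommGroup A] [Module R A] [Module.FinitePresentation R A] :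
    ∀ h : A →ₗ[R] F, ∃ h' : A →ₗ[R] M, g.comp h' = h := by
  intro h
  obtain ⟨κ, h₂, h₃, hfact⟩ :=
    Module.Flat.exists_factorization_of_isFinitelyPresented (R := R) (M := F) h
  obtain ⟨l, hl⟩ := (Module.projective_lifting_property (R := R) g h₃ hg)
  exact ⟨l ∘ₗ h₂, by rw [hfact, ← hl, LinearMap.comp_assoc]⟩
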